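/- Let b = {b_j : j ∈ ℤ} be a sequence of polynomial growth, i.e. there exist C > 0 and β > 0 with |b_j| ≤ C(1 + |j|)^β for all j. Then the series f_b(x) = Σ_{j∈ℤ} b_j L_k(x − j) converges absolutely for every x ∈ ℝ, and the convergence is uniform on every compact subset of ℝ. -/

import Mathlib

open MeasureTheory Filter
open scoped ENNReal

noncomputable def S (α : ℝ) (k : ℕ) (ξ : ℝ) : ℝ :=
  ∑' j : ℤ, (((ξ - 2 * Real.pi * j) ^ 2 + α ^ 2) ^ k)⁻¹

noncomputable def Lhat (α : ℝ) (k : ℕ) (ξ : ℝ) : ℝ :=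
  (Real.sqrt (2 * Real.pi))⁻¹ * ((ξ ^ 2 + α ^ 2) ^ k)⁻¹ / S α k ξ

noncomputable def Lk (α : ℝ) (k : ℕ) (x : ℝ) : ℝ :=
  (((Real.sqrt (2 * Real.pi) : ℂ))⁻¹ *
    ∫ ξ : ℝ, (Lhat α k ξ : ℂ) * Complex.exp (Complex.I * x * ξ)).re

namespace Stmt7

noncomputable def g (α : ℝ) (k : ℕ) (u : ℝ) : ℝ := (((u ^ 2 + α ^ 2) ^ k)⁻¹)

lemma sq_add_pos {α : ℝ} (hα : 0 < α) (u : ℝ) : 0 < u ^ 2 + α ^ 2 := by positivity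

lemma contDiff_g {α : ℝ} (hα : 0 < α) (k : ℕ) : ContDiff ℝ (((⊤ : ℕ∞) : WithTop ℕ∞)) (g α k) := by
  apply ContDiff.inv
  · exact (((contDiff_id.pow 2).add contDiff_const).pow k)
  · intro x
    exact (pow_pos (sq_add_pos hα x) k).ne'

/-- Structure of iterated derivatives of `g`. -/
lemma iter_g_struct {α : ℝ} (hα : 0 < α) {k : ℕ} (hk : 1 ≤ k) (m : ℕ) :
    ∃ P : Polynomial ℝ, P.natDegree ≤ m ∧
      ∀ u, iteratedDeriv m (g α k) u = P.eval u / (u ^ 2 + α ^ 2) ^ (k + m) := by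
  induction m with
  | zero =>
    refine ⟨1, by simp, fun u => ?_⟩
    simp only [iteratedDeriv_zero, g, Polynomial.eval_one, Nat.add_zero, one_div]
  | succ m ih =>
    obtain ⟨P, hPd, hP⟩ := ih
    refine ⟨Polynomial.derivative P * (Polynomial.X ^ 2 + Polynomial.C (α ^ 2))
      - Polynomial.C (2 * ((k : ℝ) + m)) * Polynomial.X * P, ?_, fun u => ?_⟩
    · apply (Polynomial.natDegree_sub_le _ _).trans
      apply max_le
      · rcases eq_or_ne (Polynomial.derivative P) 0 with h0 | h0
        · simp [h0]
        · apply (Polynomial.natDegree_mul_le).trans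
          have h1 : P.natDegree ≠ 0 := by
            intro h
            exact h0 (Polynomial.derivative_of_natDegree_zero h)
          have := Polynomial.natDegree_derivative_lt h1
          have h2 : (Polynomial.X ^ 2 + Polynomial.C (α ^ 2) : Polynomial ℝ).natDegree ≤ 2 := by
            apply (Polynomial.natDegree_add_le _ _).trans
            simp [Polynomial.natDegree_X_pow]
          omega
      · apply (Polynomial.natDegree_mul_le).trans
        have h2 : (Polynomial.C (2 * ((k : ℝ) + m)) * Polynomial.X : Polynomial ℝ).natDegree ≤ 1 :=
          (Polynomial.natDegree_C_mul_le _ _).trans (by simp)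
        omega
    · rw [iteratedDeriv_succ]
      have hD : ∀ x : ℝ, HasDerivAt (fun u => (u ^ 2 + α ^ 2) ^ (k + m))
          (((k : ℝ) + m) * (x ^ 2 + α ^ 2) ^ (k + m - 1) * (2 * x)) x := by
        intro x
        have h1 : HasDerivAt (fun u : ℝ => u ^ 2 + α ^ 2) (2 * x) x := by
          simpa using ((hasDerivAt_pow 2 x).add_const (α ^ 2))
        have := h1.fun_pow (k + m)
        refine this.congr_deriv ?_
        push_cast [Nat.cast_sub (by omega : 1 ≤ k + m)]
        ring
      have hnum : ∀ x : ℝ, HasDerivAt (fun u => P.eval u) (P.derivative.eval x) x :=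
        fun x => P.hasDerivAt x
      have key : ∀ x : ℝ, HasDerivAt (fun u => P.eval u / (u ^ 2 + α ^ 2) ^ (k + m))
          ((Polynomial.derivative P * (Polynomial.X ^ 2 + Polynomial.C (α ^ 2))
            - Polynomial.C (2 * ((k : ℝ) + m)) * Polynomial.X * P).eval x
            / (x ^ 2 + α ^ 2) ^ (k + m + 1)) x := by
        intro x
        have hden : ((x : ℝ) ^ 2 + α ^ 2) ^ (k + m) ≠ 0 := (pow_pos (sq_add_pos hα x) (k + m)).ne'
        have := (hnum x).fun_div (hD x) hden
        refine this.congr_deriv ?_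
        have hpos : (0:ℝ) < x ^ 2 + α ^ 2 := sq_add_pos hα x
        obtain ⟨n, hn⟩ : ∃ n, k + m = n + 1 := ⟨k + m - 1, by omega⟩
        simp only [Polynomial.eval_sub, Polynomial.eval_mul, Polynomial.eval_add,
          Polynomial.eval_pow, Polynomial.eval_C, Polynomial.eval_X, hn,
          Nat.add_sub_cancel]
        rw [div_eq_div_iff (by positivity) (by positivity)]
        push_cast
        ring
      have heq : iteratedDeriv m (g α k) = fun u => P.eval u / (u ^ 2 + α ^ 2) ^ (k + m) :=
        funext hP
      rw [heq]
      exact (key u).deriv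


lemma poly_bound (P : Polynomial ℝ) {m : ℕ} (hP : P.natDegree ≤ m) :
    ∃ c : ℝ, 0 ≤ c ∧ ∀ u : ℝ, |P.eval u| ≤ c * (1 + u ^ 2) ^ m := by
  refine ⟨∑ i ∈ Finset.range (m + 1), |P.coeff i|, Finset.sum_nonneg fun _ _ => abs_nonneg _,
    fun u => ?_⟩
  have h1 : (1:ℝ) ≤ 1 + u ^ 2 := by nlinarith [sq_nonneg u]
  rw [Polynomial.eval_eq_sum_range' (Nat.lt_succ_of_le hP), Finset.sum_mul]
  refine (Finset.abs_sum_le_sum_abs _ _).trans (Finset.sum_le_sum fun i hi => ?_)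
  rw [abs_mul, abs_pow]
  have h2 : |u| ^ i ≤ (1 + u ^ 2) ^ m := by
    calc |u| ^ i ≤ (1 + u ^ 2) ^ i := by
          apply pow_le_pow_left₀ (abs_nonneg u)
          nlinarith [sq_nonneg (|u| - 1), sq_abs u]
      _ ≤ (1 + u ^ 2) ^ m := pow_le_pow_right₀ h1 (Finset.mem_range_succ_iff.mp hi)
  exact mul_le_mul_of_nonneg_left h2 (abs_nonneg _)

/-- Decay bound for iterated derivatives of `g`. -/
lemma iter_g_bound {α : ℝ} (hα : 0 < α) {k : ℕ} (hk : 1 ≤ k) (m : ℕ) :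
    ∃ c : ℝ, 0 ≤ c ∧ ∀ u : ℝ, |iteratedDeriv m (g α k) u| ≤ c * (1 + u ^ 2)⁻¹ := by
  obtain ⟨P, hPd, hP⟩ := iter_g_struct hα hk m
  obtain ⟨c, hc0, hc⟩ := poly_bound P hPd
  set ε : ℝ := min 1 (α ^ 2) with hε
  have hε0 : 0 < ε := lt_min one_pos (by positivity)
  refine ⟨c / ε ^ (k + m), by positivity, fun u => ?_⟩
  have h1 : (1:ℝ) ≤ 1 + u ^ 2 := by nlinarith [sq_nonneg u]
  have hDpos : 0 < u ^ 2 + α ^ 2 := sq_add_pos hα u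
  have hkey : ε * (1 + u ^ 2) ≤ u ^ 2 + α ^ 2 := by
    have h2 : ε ≤ 1 := min_le_left _ _
    have h3 : ε ≤ α ^ 2 := min_le_right _ _
    nlinarith [sq_nonneg u]
  have hpow : ε ^ (k + m) * (1 + u ^ 2) ^ (k + m) ≤ (u ^ 2 + α ^ 2) ^ (k + m) := by
    rw [← mul_pow]
    exact pow_le_pow_left₀ (by positivity) hkey _
  rw [hP, abs_div, abs_of_pos (pow_pos hDpos _)]
  rw [div_le_iff₀ (pow_pos hDpos _)]
  calc |P.eval u| ≤ c * (1 + u ^ 2) ^ m := hc u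
    _ = (c / ε ^ (k + m)) * (ε ^ (k + m) * (1 + u ^ 2) ^ (m + 1)) * (1 + u ^ 2)⁻¹ *
          ((1 + u ^ 2) ^ m / (1 + u ^ 2) ^ m) := by
        field_simp
        ring
    _ ≤ (c / ε ^ (k + m)) * (1 + u ^ 2)⁻¹ * (u ^ 2 + α ^ 2) ^ (k + m) := by
        rw [div_self (by positivity : ((1:ℝ) + u ^ 2) ^ m ≠ 0), mul_one]
        have h4 : ε ^ (k + m) * (1 + u ^ 2) ^ (m + 1) ≤ (u ^ 2 + α ^ 2) ^ (k + m) := by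
          refine le_trans ?_ hpow
          have : (1 + u ^ 2) ^ (m + 1) ≤ (1 + u ^ 2) ^ (k + m) :=
            pow_le_pow_right₀ h1 (by omega)
          nlinarith [pow_pos hε0 (k + m)]
        calc (c / ε ^ (k + m)) * (ε ^ (k + m) * (1 + u ^ 2) ^ (m + 1)) * (1 + u ^ 2)⁻¹
            = (c / ε ^ (k + m)) * (1 + u ^ 2)⁻¹ * (ε ^ (k + m) * (1 + u ^ 2) ^ (m + 1)) := by ring
          _ ≤ (c / ε ^ (k + m)) * (1 + u ^ 2)⁻¹ * (u ^ 2 + α ^ 2) ^ (k + m) := by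
              apply mul_le_mul_of_nonneg_left h4
              positivity
    _ = (c / ε ^ (k + m)) * (1 + u ^ 2)⁻¹ * (u ^ 2 + α ^ 2) ^ (k + m) := rfl

/-- Summability of `(1 + j²)⁻¹` over `ℤ`. -/
lemma summable_inv_one_add_sq_int : Summable (fun j : ℤ => ((1:ℝ) + (j:ℝ) ^ 2)⁻¹) := by
  have hnat : Summable (fun n : ℕ => ((1:ℝ) + (n:ℝ) ^ 2)⁻¹) := by
    have h2 : Summable (fun n : ℕ => ((((n:ℝ) + 1) ^ 2)⁻¹ : ℝ) * 2) := by
      apply Summable.mul_right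
      have := (Real.summable_one_div_nat_pow (p := 2)).mpr one_lt_two
      rw [← summable_nat_add_iff 1] at this
      simpa [one_div] using this
    apply Summable.of_nonneg_of_le (fun n => by positivity) (fun n => ?_) h2
    calc ((1:ℝ) + (n:ℝ) ^ 2)⁻¹ ≤ (((n:ℝ) + 1) ^ 2 / 2)⁻¹ := by
          apply inv_anti₀ (by positivity)
          nlinarith [sq_nonneg ((n:ℝ) - 1)]
      _ = (((n:ℝ) + 1) ^ 2)⁻¹ * 2 := by rw [inv_div]; ring
  apply Summable.of_nat_of_neg <;> simpa using hnat

/-- Translate comparison: for `|x| ≤ R` and spacing `a ≥ 1`,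
`(1+(x-a j)²)⁻¹ ≤ 4(1+R²)(1+j²)⁻¹`. -/
lemma transl_bound {a R : ℝ} (ha : 1 ≤ a) (hR : 0 ≤ R) {x : ℝ} (hx : |x| ≤ R) (j : ℤ) :
    ((1:ℝ) + (x - a * j) ^ 2)⁻¹ ≤ (4 * (1 + R ^ 2)) * ((1:ℝ) + (j:ℝ) ^ 2)⁻¹ := by
  have h1j : (0:ℝ) < 1 + (j:ℝ) ^ 2 := by positivity
  have h1x : (0:ℝ) < 1 + (x - a * j) ^ 2 := by positivity
  rcases le_or_gt (2 * R) (a * |(j:ℝ)|) with hcase | hcase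
  ·
    have habs : |(j:ℝ)| / 2 ≤ |x - a * j| := by
      have h2 : a * |(j:ℝ)| - R ≤ |x - a * j| := by
        have := abs_sub_abs_le_abs_sub (a * (j:ℝ)) x
        rw [abs_mul, abs_of_pos (lt_of_lt_of_le one_pos ha)] at this
        calc a * |(j:ℝ)| - R ≤ a * |(j:ℝ)| - |x| := by linarith
          _ ≤ |a * (j:ℝ) - x| := by
              have := abs_sub_abs_le_abs_sub (a * (j:ℝ)) x
              rw [abs_mul, abs_of_pos (lt_of_lt_of_le one_pos ha)] at this
              linarith
          _ = |x - a * j| := abs_sub_comm _ _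
      have h3 : a * |(j:ℝ)| / 2 ≤ a * |(j:ℝ)| - R := by linarith
      have h4 : |(j:ℝ)| / 2 ≤ a * |(j:ℝ)| / 2 := by
        have : |(j:ℝ)| ≤ a * |(j:ℝ)| := le_mul_of_one_le_left (abs_nonneg _) ha
        linarith
      linarith
    have hsq : (j:ℝ) ^ 2 / 4 ≤ (x - a * j) ^ 2 := by
      have := mul_self_le_mul_self (by positivity : (0:ℝ) ≤ |(j:ℝ)| / 2) habs
      calc ((j:ℝ)) ^ 2 / 4 = (|(j:ℝ)| / 2) * (|(j:ℝ)| / 2) := by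
            rw [← sq_abs]; ring
        _ ≤ |x - a * j| * |x - a * j| := this
        _ = (x - a * j) ^ 2 := by rw [← sq_abs]; ring
    rw [show (4 * (1 + R ^ 2)) * ((1:ℝ) + (j:ℝ) ^ 2)⁻¹ = (4 * (1 + R ^ 2)) / (1 + (j:ℝ) ^ 2)
      from (div_eq_mul_inv _ _).symm, inv_eq_one_div, div_le_div_iff₀ h1x h1j]
    nlinarith [hsq, sq_nonneg R, mul_nonneg (sq_nonneg R) (sq_nonneg (x - a * (j:ℝ)))]
  · -- near case : j² ≤ 4R²
    have hj2 : (j:ℝ) ^ 2 ≤ 4 * R ^ 2 := by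
      have hja : |(j:ℝ)| ≤ a * |(j:ℝ)| := le_mul_of_one_le_left (abs_nonneg _) ha
      have h7 : |(j:ℝ)| ≤ 2 * R := by linarith
      nlinarith [sq_abs ((j:ℝ)), mul_self_le_mul_self (abs_nonneg ((j:ℝ))) h7]
    have hterm : ((1:ℝ) + (x - a * j) ^ 2)⁻¹ ≤ 1 := by
      rw [inv_le_one_iff₀]; right; nlinarith [sq_nonneg (x - a * j)]
    refine hterm.trans ?_
    have h6 : (1:ℝ) + (j:ℝ) ^ 2 ≤ 4 * (1 + R ^ 2) := by nlinarith
    calc (1:ℝ) = (1 + (j:ℝ) ^ 2) * (1 + (j:ℝ) ^ 2)⁻¹ := (mul_inv_cancel₀ h1j.ne').symm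
      _ ≤ 4 * (1 + R ^ 2) * (1 + (j:ℝ) ^ 2)⁻¹ :=
          mul_le_mul_of_nonneg_right h6 (inv_nonneg.mpr h1j.le)

lemma one_le_two_pi : (1:ℝ) ≤ 2 * Real.pi := by nlinarith [Real.pi_gt_three]

noncomputable def Sm (α : ℝ) (k m : ℕ) (ξ : ℝ) : ℝ :=
  ∑' j : ℤ, iteratedDeriv m (g α k) (ξ - 2 * Real.pi * j)

lemma S_eq_Sm (α : ℝ) (k : ℕ) : S α k = Sm α k 0 := by
  funext ξ
  simp [S, Sm, iteratedDeriv_zero, g]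

lemma summable_Sm {α : ℝ} (hα : 0 < α) {k : ℕ} (hk : 1 ≤ k) (m : ℕ) (ξ : ℝ) :
    Summable (fun j : ℤ => iteratedDeriv m (g α k) (ξ - 2 * Real.pi * j)) := by
  obtain ⟨c, hc0, hc⟩ := iter_g_bound hα hk m
  apply Summable.of_abs
  apply Summable.of_nonneg_of_le (fun j => abs_nonneg _) (fun j => ?_)
    (((summable_inv_one_add_sq_int).mul_left (c * (4 * (1 + |ξ| ^ 2)))))
  calc |iteratedDeriv m (g α k) (ξ - 2 * Real.pi * j)|
      ≤ c * (1 + (ξ - 2 * Real.pi * j) ^ 2)⁻¹ := hc _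
    _ ≤ c * ((4 * (1 + |ξ| ^ 2)) * (1 + (j:ℝ) ^ 2)⁻¹) := by
        apply mul_le_mul_of_nonneg_left _ hc0
        exact transl_bound one_le_two_pi (abs_nonneg ξ) (le_refl _) j
    _ = c * (4 * (1 + |ξ| ^ 2)) * (1 + (j:ℝ) ^ 2)⁻¹ := by ring

lemma cast_lt_top (m : ℕ) : (m : WithTop ℕ∞) < ((⊤ : ℕ∞) : WithTop ℕ∞) := by
  rw [show ((m : WithTop ℕ∞)) = (((m : ℕ∞)) : WithTop ℕ∞) by norm_cast]
  exact WithTop.coe_lt_coe.mpr (WithTop.coe_lt_top m)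

lemma hasDerivAt_term {α : ℝ} (hα : 0 < α) (k m : ℕ) (c x : ℝ) :
    HasDerivAt (fun y => iteratedDeriv m (g α k) (y - c))
      (iteratedDeriv (m + 1) (g α k) (x - c)) x := by
  have hdm : HasDerivAt (iteratedDeriv m (g α k)) (iteratedDeriv (m + 1) (g α k) (x - c))
      (x - c) := by
    rw [iteratedDeriv_succ]
    exact (((contDiff_g hα k).differentiable_iteratedDeriv m
      (cast_lt_top m)) (x - c)).hasDerivAt
  have := hdm.comp x ((hasDerivAt_id x).sub_const c)
  simpa [Function.comp_def] using this

lemma hasDerivAt_Sm {α : ℝ} (hα : 0 < α) {k : ℕ} (hk : 1 ≤ k) (m : ℕ) (ξ : ℝ) :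
    HasDerivAt (Sm α k m) (Sm α k (m + 1) ξ) ξ := by
  classical
  set R : ℝ := |ξ| + 1 with hR
  have hR0 : 0 ≤ R := by positivity
  obtain ⟨c, hc0, hc⟩ := iter_g_bound hα hk (m + 1)
  apply hasDerivAt_of_tendstoUniformlyOn (l := (atTop : Filter (Finset ℤ)))
    (Metric.isOpen_ball)
    (f := fun (t : Finset ℤ) (x : ℝ) => ∑ j ∈ t, iteratedDeriv m (g α k) (x - 2 * Real.pi * j))
    (f' := fun (t : Finset ℤ) (x : ℝ) =>
      ∑ j ∈ t, iteratedDeriv (m + 1) (g α k) (x - 2 * Real.pi * j))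
    (s := Metric.ball (0:ℝ) R)
  · apply tendstoUniformlyOn_tsum
      (u := fun j : ℤ => c * (4 * (1 + R ^ 2)) * (1 + (j:ℝ) ^ 2)⁻¹)
      ((summable_inv_one_add_sq_int).mul_left _)
    intro j x hx
    rw [Metric.mem_ball, Real.dist_eq, sub_zero] at hx
    calc ‖iteratedDeriv (m + 1) (g α k) (x - 2 * Real.pi * j)‖
        ≤ c * (1 + (x - 2 * Real.pi * j) ^ 2)⁻¹ := hc _
      _ ≤ c * ((4 * (1 + R ^ 2)) * (1 + (j:ℝ) ^ 2)⁻¹) := by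
          apply mul_le_mul_of_nonneg_left _ hc0
          exact transl_bound one_le_two_pi hR0 hx.le j
      _ = c * (4 * (1 + R ^ 2)) * (1 + (j:ℝ) ^ 2)⁻¹ := by ring
  · filter_upwards with t
    intro x _
    exact HasDerivAt.fun_sum fun j _ => hasDerivAt_term hα k m _ x
  · intro x _
    exact (summable_Sm hα hk m x).hasSum
  · rw [Metric.mem_ball, Real.dist_eq, sub_zero]
    linarith [abs_nonneg ξ]

lemma deriv_Sm {α : ℝ} (hα : 0 < α) {k : ℕ} (hk : 1 ≤ k) (m : ℕ) :
    deriv (Sm α k m) = Sm α k (m + 1) :=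
  funext fun ξ => (hasDerivAt_Sm hα hk m ξ).deriv

lemma contDiff_Sm {α : ℝ} (hα : 0 < α) {k : ℕ} (hk : 1 ≤ k) (m : ℕ) :
    ContDiff ℝ (((⊤ : ℕ∞) : WithTop ℕ∞)) (Sm α k m) := by
  have key : ∀ n : ℕ, ∀ m : ℕ, ContDiff ℝ (n : WithTop ℕ∞) (Sm α k m) := by
    intro n
    induction n with
    | zero =>
      intro m
      rw [show ((0:ℕ) : WithTop ℕ∞) = 0 by norm_cast]
      exact contDiff_zero.mpr
        (continuous_iff_continuousAt.mpr
          fun ξ => (hasDerivAt_Sm hα hk m ξ).differentiableAt.continuousAt)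
    | succ n ih =>
      intro m
      rw [show (((n+1:ℕ)) : WithTop ℕ∞) = (n : WithTop ℕ∞) + 1 by push_cast; ring]
      rw [contDiff_succ_iff_deriv]
      refine ⟨fun ξ => (hasDerivAt_Sm hα hk m ξ).differentiableAt, ?_, ?_⟩
      · intro h
        exact absurd h (by exact_mod_cast (WithTop.coe_ne_top))
      · rw [deriv_Sm hα hk m]
        exact ih (m + 1)
  rw [show (((⊤ : ℕ∞) : WithTop ℕ∞)) = (⊤ : ℕ∞) by rfl]
  exact contDiff_infty.mpr (fun n => key n m)

lemma periodic_Sm {α : ℝ} (hα : 0 < α) {k : ℕ} (hk : 1 ≤ k) (m : ℕ) :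
    Function.Periodic (Sm α k m) (2 * Real.pi) := by
  intro ξ
  unfold Sm
  have h1 : ∀ j : ℤ, iteratedDeriv m (g α k) (ξ + 2 * Real.pi - 2 * Real.pi * j)
      = iteratedDeriv m (g α k) (ξ - 2 * Real.pi * ((Equiv.subRight (1:ℤ)) j)) := by
    intro j
    congr 1
    simp only [Equiv.subRight_apply]
    push_cast
    ring
  rw [tsum_congr h1]
  exact Equiv.tsum_eq (Equiv.subRight (1:ℤ))
    (fun j : ℤ => iteratedDeriv m (g α k) (ξ - 2 * Real.pi * j))

lemma S_lower_bound {α : ℝ} (hα : 0 < α) {k : ℕ} (hk : 1 ≤ k) (ξ : ℝ) :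
    ((Real.pi ^ 2 + α ^ 2) ^ k)⁻¹ ≤ S α k ξ := by
  rw [S_eq_Sm]
  unfold Sm
  set i : ℤ := round (ξ / (2 * Real.pi)) with hi
  have h2π : (0:ℝ) < 2 * Real.pi := by positivity
  have h1 : |ξ - 2 * Real.pi * i| ≤ Real.pi := by
    have hr := abs_sub_round (ξ / (2 * Real.pi))
    have h4 : ξ - 2 * Real.pi * i = (ξ / (2 * Real.pi) - i) * (2 * Real.pi) := by
      field_simp
    rw [h4, abs_mul, abs_of_pos h2π]
    calc |ξ / (2 * Real.pi) - (i:ℝ)| * (2 * Real.pi) ≤ (1/2) * (2 * Real.pi) :=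
          mul_le_mul_of_nonneg_right hr h2π.le
      _ = Real.pi := by ring
  have h5 : iteratedDeriv 0 (g α k) (ξ - 2 * Real.pi * i) ≥ ((Real.pi ^ 2 + α ^ 2) ^ k)⁻¹ := by
    rw [iteratedDeriv_zero]
    unfold g
    apply inv_anti₀ (by positivity)
    apply pow_le_pow_left₀ (by positivity)
    nlinarith [sq_abs (ξ - 2 * Real.pi * i), Real.pi_pos,
      mul_self_le_mul_self (abs_nonneg (ξ - 2 * Real.pi * i)) h1]
  calc ((Real.pi ^ 2 + α ^ 2) ^ k)⁻¹ ≤ iteratedDeriv 0 (g α k) (ξ - 2 * Real.pi * i) := h5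
    _ ≤ ∑' j : ℤ, iteratedDeriv 0 (g α k) (ξ - 2 * Real.pi * j) := by
        apply Summable.le_tsum (summable_Sm hα hk 0 ξ) i
        intro j _
        rw [iteratedDeriv_zero]
        unfold g
        positivity

lemma S_pos {α : ℝ} (hα : 0 < α) {k : ℕ} (hk : 1 ≤ k) (ξ : ℝ) : 0 < S α k ξ :=
  lt_of_lt_of_le (by positivity) (S_lower_bound hα hk ξ)

noncomputable def Sinv (α : ℝ) (k : ℕ) (ξ : ℝ) : ℝ := (S α k ξ)⁻¹

lemma contDiff_S {α : ℝ} (hα : 0 < α) {k : ℕ} (hk : 1 ≤ k) :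
    ContDiff ℝ (((⊤ : ℕ∞) : WithTop ℕ∞)) (S α k) := by
  rw [S_eq_Sm]
  exact contDiff_Sm hα hk 0

lemma contDiff_Sinv {α : ℝ} (hα : 0 < α) {k : ℕ} (hk : 1 ≤ k) :
    ContDiff ℝ (((⊤ : ℕ∞) : WithTop ℕ∞)) (Sinv α k) :=
  (contDiff_S hα hk).inv (fun ξ => (S_pos hα hk ξ).ne')

lemma periodic_Sinv {α : ℝ} (hα : 0 < α) {k : ℕ} (hk : 1 ≤ k) :
    Function.Periodic (Sinv α k) (2 * Real.pi) := by
  intro ξ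
  unfold Sinv
  rw [S_eq_Sm]
  exact congrArg Inv.inv (periodic_Sm hα hk 0 ξ)

lemma periodic_deriv {f : ℝ → ℝ} {c : ℝ} (hf : Function.Periodic f c) :
    Function.Periodic (deriv f) c := by
  intro x
  have h1 : (fun y => f (y + c)) = f := funext hf
  calc deriv f (x + c) = deriv (fun y => f (y + c)) x := (deriv_comp_add_const f c x).symm
    _ = deriv f x := by rw [h1]

lemma periodic_iteratedDeriv {f : ℝ → ℝ} {c : ℝ} (hf : Function.Periodic f c) (n : ℕ) :
    Function.Periodic (iteratedDeriv n f) c := by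
  induction n with
  | zero => simpa [iteratedDeriv_zero] using hf
  | succ n ih =>
    intro x
    rw [iteratedDeriv_succ]
    exact periodic_deriv ih x

lemma bounded_of_periodic_continuous {f : ℝ → ℝ} (hf : Continuous f)
    (hp : Function.Periodic f (2 * Real.pi)) : ∃ B : ℝ, 0 ≤ B ∧ ∀ x, |f x| ≤ B := by
  obtain ⟨C, hC⟩ := (isCompact_Icc (a := (0:ℝ)) (b := 2 * Real.pi)).exists_bound_of_continuousOn
    hf.continuousOn
  refine ⟨max C 0, le_max_right _ _, fun x => ?_⟩
  obtain ⟨y, hy, hxy⟩ := hp.exists_mem_Ico₀ (by positivity) x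
  rw [hxy]
  calc |f y| = ‖f y‖ := rfl
    _ ≤ C := hC y ⟨hy.1, hy.2.le⟩
    _ ≤ max C 0 := le_max_left _ _

lemma iter_Sinv_bound {α : ℝ} (hα : 0 < α) {k : ℕ} (hk : 1 ≤ k) (n : ℕ) :
    ∃ B : ℝ, 0 ≤ B ∧ ∀ ξ, |iteratedDeriv n (Sinv α k) ξ| ≤ B := by
  apply bounded_of_periodic_continuous
  · exact (contDiff_Sinv hα hk).continuous_iteratedDeriv n (cast_lt_top n).le
  · exact periodic_iteratedDeriv (periodic_Sinv hα hk) n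

lemma Lhat_eq {α : ℝ} (k : ℕ) :
    Lhat α k = fun ξ => ((Real.sqrt (2 * Real.pi))⁻¹ • g α k) ξ * Sinv α k ξ := by
  funext ξ
  simp only [Lhat, Sinv, g, Pi.smul_apply, smul_eq_mul, div_eq_mul_inv]

lemma contDiff_Lhat {α : ℝ} (hα : 0 < α) {k : ℕ} (hk : 1 ≤ k) :
    ContDiff ℝ (((⊤ : ℕ∞) : WithTop ℕ∞)) (Lhat α k) := by
  rw [Lhat_eq]
  exact (((contDiff_g hα k).const_smul ((Real.sqrt (2 * Real.pi))⁻¹ : ℝ)).mul (contDiff_Sinv hα hk))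

lemma iter_Lhat_bound {α : ℝ} (hα : 0 < α) {k : ℕ} (hk : 1 ≤ k) (n : ℕ) :
    ∃ D : ℝ, 0 ≤ D ∧ ∀ ξ, ‖iteratedDeriv n (Lhat α k) ξ‖ ≤ D * (1 + ξ ^ 2)⁻¹ := by
  choose cg hcg0 hcg using iter_g_bound hα hk
  choose B hB0 hB using iter_Sinv_bound hα hk
  set c0 : ℝ := (Real.sqrt (2 * Real.pi))⁻¹ with hc0
  refine ⟨∑ i ∈ Finset.range (n + 1),
    (n.choose i : ℝ) * (|c0| * cg i) * B (n - i), ?_, fun ξ => ?_⟩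
  · apply Finset.sum_nonneg
    intro i _
    have := hcg0 i
    have := hB0 (n - i)
    positivity
  · have hmul : ‖iteratedFDeriv ℝ n (fun y => (c0 • g α k) y * Sinv α k y) ξ‖ ≤
        ∑ i ∈ Finset.range (n + 1), (n.choose i : ℝ) *
          ‖iteratedFDeriv ℝ i (c0 • g α k) ξ‖ * ‖iteratedFDeriv ℝ (n - i) (Sinv α k) ξ‖ :=
      norm_iteratedFDeriv_mul_le ((contDiff_g hα k).const_smul c0) (contDiff_Sinv hα hk) ξ
        (cast_lt_top n).le
    rw [← norm_iteratedFDeriv_eq_norm_iteratedDeriv, Lhat_eq]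
    calc ‖iteratedFDeriv ℝ n (fun y => (c0 • g α k) y * Sinv α k y) ξ‖
        ≤ ∑ i ∈ Finset.range (n + 1), (n.choose i : ℝ) *
          ‖iteratedFDeriv ℝ i (c0 • g α k) ξ‖ * ‖iteratedFDeriv ℝ (n - i) (Sinv α k) ξ‖ := hmul
      _ ≤ ∑ i ∈ Finset.range (n + 1),
          ((n.choose i : ℝ) * (|c0| * cg i) * B (n - i)) * (1 + ξ ^ 2)⁻¹ := by
          apply Finset.sum_le_sum
          intro i hi
          have h1 : ‖iteratedFDeriv ℝ i (c0 • g α k) ξ‖ ≤ |c0| * ‖iteratedFDeriv ℝ i (g α k) ξ‖ := by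
            rw [iteratedFDeriv_const_smul_apply ((contDiff_g hα k).of_le (cast_lt_top i).le).contDiffAt]
            simpa [Real.norm_eq_abs] using norm_smul_le c0 (iteratedFDeriv ℝ i (g α k) ξ)
          have h2 : ‖iteratedFDeriv ℝ i (g α k) ξ‖ ≤ cg i * (1 + ξ ^ 2)⁻¹ := by
            rw [norm_iteratedFDeriv_eq_norm_iteratedDeriv]
            exact hcg i ξ
          have h3 : ‖iteratedFDeriv ℝ (n - i) (Sinv α k) ξ‖ ≤ B (n - i) := by
            rw [norm_iteratedFDeriv_eq_norm_iteratedDeriv]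
            exact hB (n - i) ξ
          have hinv : (0:ℝ) ≤ (1 + ξ ^ 2)⁻¹ := by positivity
          calc (n.choose i : ℝ) * ‖iteratedFDeriv ℝ i (c0 • g α k) ξ‖ *
                ‖iteratedFDeriv ℝ (n - i) (Sinv α k) ξ‖
              ≤ (n.choose i : ℝ) * (|c0| * (cg i * (1 + ξ ^ 2)⁻¹)) * B (n - i) := by
                apply mul_le_mul
                · apply mul_le_mul_of_nonneg_left _ (by positivity)
                  exact h1.trans (mul_le_mul_of_nonneg_left h2 (abs_nonneg _))
                · exact h3
                · exact norm_nonneg _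
                · have := hcg0 i
                  positivity
            _ = ((n.choose i : ℝ) * (|c0| * cg i) * B (n - i)) * (1 + ξ ^ 2)⁻¹ := by ring
      _ = (∑ i ∈ Finset.range (n + 1),
          (n.choose i : ℝ) * (|c0| * cg i) * B (n - i)) * (1 + ξ ^ 2)⁻¹ := by
          rw [Finset.sum_mul]

lemma integrable_iter_Lhat {α : ℝ} (hα : 0 < α) {k : ℕ} (hk : 1 ≤ k) (n : ℕ) :
    Integrable (iteratedDeriv n (Lhat α k)) := by
  obtain ⟨D, hD0, hD⟩ := iter_Lhat_bound hα hk n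
  apply Integrable.mono' (integrable_inv_one_add_sq.const_mul D)
  · exact ((contDiff_Lhat hα hk).continuous_iteratedDeriv n (cast_lt_top n).le).aestronglyMeasurable
  · filter_upwards with ξ
    exact hD ξ

noncomputable def Fc (α : ℝ) (k : ℕ) (ξ : ℝ) : ℂ := (Lhat α k ξ : ℂ)

lemma Fc_eq (α : ℝ) (k : ℕ) : Fc α k = (Complex.ofRealLI : ℝ →ₗᵢ[ℝ] ℂ) ∘ (Lhat α k) := rfl

lemma contDiff_Fc {α : ℝ} (hα : 0 < α) {k : ℕ} (hk : 1 ≤ k) :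
    ContDiff ℝ (((⊤ : ℕ∞) : WithTop ℕ∞)) (Fc α k) :=
  Complex.ofRealCLM.contDiff.comp (contDiff_Lhat hα hk)

lemma norm_iter_Fc {α : ℝ} (hα : 0 < α) {k : ℕ} (hk : 1 ≤ k) (n : ℕ) (ξ : ℝ) :
    ‖iteratedDeriv n (Fc α k) ξ‖ = ‖iteratedDeriv n (Lhat α k) ξ‖ := by
  rw [← norm_iteratedFDeriv_eq_norm_iteratedDeriv, ← norm_iteratedFDeriv_eq_norm_iteratedDeriv,
    Fc_eq]
  exact (Complex.ofRealLI : ℝ →ₗᵢ[ℝ] ℂ).norm_iteratedFDeriv_comp_left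
    (contDiff_Lhat hα hk).contDiffAt (cast_lt_top n).le

lemma integrable_iter_Fc {α : ℝ} (hα : 0 < α) {k : ℕ} (hk : 1 ≤ k) (n : ℕ) :
    Integrable (iteratedDeriv n (Fc α k)) := by
  obtain ⟨D, hD0, hD⟩ := iter_Lhat_bound hα hk n
  apply Integrable.mono' (integrable_inv_one_add_sq.const_mul D)
  · exact ((contDiff_Fc hα hk).continuous_iteratedDeriv n (cast_lt_top n).le).aestronglyMeasurable
  · filter_upwards with ξ
    rw [norm_iter_Fc hα hk n ξ]
    exact hD ξ

open scoped FourierTransform in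
lemma fourier_decay {α : ℝ} (hα : 0 < α) {k : ℕ} (hk : 1 ≤ k) (n : ℕ) :
    ∃ M : ℝ, 0 ≤ M ∧ ∀ w : ℝ, (2 * Real.pi * |w|) ^ n * ‖𝓕 (Fc α k) w‖ ≤ M := by
  refine ⟨∫ ξ : ℝ, ‖iteratedDeriv n (Fc α k) ξ‖, integral_nonneg (fun _ => norm_nonneg _),
    fun w => ?_⟩
  have key := Real.fourier_iteratedDeriv (f := Fc α k) (N := (⊤ : ℕ∞)) (n := n)
    (contDiff_Fc hα hk) (fun m _ => integrable_iter_Fc hα hk m) le_top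
  have h1 : ‖𝓕 (iteratedDeriv n (Fc α k)) w‖ ≤ ∫ ξ : ℝ, ‖iteratedDeriv n (Fc α k) ξ‖ :=
    VectorFourier.norm_fourierIntegral_le_integral_norm _ _ _ _ _
  rw [key] at h1
  have hc : ‖2 * (Real.pi:ℂ) * Complex.I * (w:ℂ)‖ = 2 * Real.pi * |w| := by
    simp only [norm_mul, Complex.norm_I, Complex.norm_real, Real.norm_eq_abs]
    rw [show ‖(2:ℂ)‖ = 2 by simp]
    rw [abs_of_pos Real.pi_pos]
    ring
  have h2 : ‖(2 * ↑Real.pi * Complex.I * ↑w) ^ n • 𝓕 (Fc α k) w‖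
      = (2 * Real.pi * |w|) ^ n * ‖𝓕 (Fc α k) w‖ := by
    rw [norm_smul, norm_pow, hc]
  rw [h2] at h1
  exact h1

open scoped FourierTransform in
lemma integral_eq_fourier {α : ℝ} (k : ℕ) (x : ℝ) :
    (∫ ξ : ℝ, (Lhat α k ξ : ℂ) * Complex.exp (Complex.I * x * ξ))
      = 𝓕 (Fc α k) (-(x / (2 * Real.pi))) := by
  rw [Real.fourier_eq']
  refine integral_congr_ae (Filter.Eventually.of_forall fun v => ?_)
  simp only [smul_eq_mul]
  have hinner : (inner ℝ v (-(x / (2 * Real.pi))) : ℝ) = v * (-(x / (2 * Real.pi))) := by simp [mul_comm]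
  rw [hinner, mul_comm]
  congr 1
  have harg : -2 * Real.pi * (v * -(x / (2 * Real.pi))) = x * v := by
    field_simp
  rw [harg]
  push_cast
  ring

open scoped FourierTransform in
lemma Lk_pow_bound {α : ℝ} (hα : 0 < α) {k : ℕ} (hk : 1 ≤ k) (n : ℕ) :
    ∃ E : ℝ, 0 ≤ E ∧ ∀ x : ℝ, |x| ^ n * |Lk α k x| ≤ E := by
  obtain ⟨M, hM0, hM⟩ := fourier_decay hα hk n
  set c0 : ℂ := ((Real.sqrt (2 * Real.pi) : ℂ))⁻¹ with hc0
  refine ⟨‖c0‖ * M, by positivity, fun x => ?_⟩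
  set w : ℝ := -(x / (2 * Real.pi)) with hw
  have habs : |Lk α k x| ≤ ‖c0‖ * ‖𝓕 (Fc α k) w‖ := by
    rw [Lk, integral_eq_fourier]
    calc |(c0 * 𝓕 (Fc α k) w).re| ≤ ‖c0 * 𝓕 (Fc α k) w‖ := Complex.abs_re_le_norm _
      _ = ‖c0‖ * ‖𝓕 (Fc α k) w‖ := norm_mul _ _
  have hxw : |x| = 2 * Real.pi * |w| := by
    rw [hw, abs_neg, abs_div, abs_of_pos (by positivity : (0:ℝ) < 2 * Real.pi)]
    field_simp
  calc |x| ^ n * |Lk α k x| ≤ |x| ^ n * (‖c0‖ * ‖𝓕 (Fc α k) w‖) := by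
        apply mul_le_mul_of_nonneg_left habs (by positivity)
    _ = ‖c0‖ * ((2 * Real.pi * |w|) ^ n * ‖𝓕 (Fc α k) w‖) := by rw [hxw]; ring
    _ ≤ ‖c0‖ * M := mul_le_mul_of_nonneg_left (hM w) (norm_nonneg _)

/-- Super-polynomial decay of `Lk`. -/
lemma Lk_decay {α : ℝ} (hα : 0 < α) {k : ℕ} (hk : 1 ≤ k) (n : ℕ) :
    ∃ D : ℝ, 0 ≤ D ∧ ∀ x : ℝ, |Lk α k x| * (1 + |x|) ^ n ≤ D := by
  obtain ⟨E0, hE00, hE0⟩ := Lk_pow_bound hα hk 0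
  obtain ⟨En, hEn0, hEn⟩ := Lk_pow_bound hα hk n
  refine ⟨2 ^ n * (E0 + En), by positivity, fun x => ?_⟩
  have h1 : (1 + |x|) ^ n ≤ 2 ^ n * (1 + |x| ^ n) := by
    calc (1 + |x|) ^ n ≤ (2 * max 1 |x|) ^ n := by
          apply pow_le_pow_left₀ (by positivity)
          rcases le_total 1 |x| with h | h
          · rw [max_eq_right h]; linarith
          · rw [max_eq_left h]; linarith
      _ = 2 ^ n * (max 1 |x|) ^ n := mul_pow _ _ _
      _ ≤ 2 ^ n * (1 + |x| ^ n) := by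
          apply mul_le_mul_of_nonneg_left _ (by positivity)
          rcases le_total 1 |x| with h | h
          · rw [max_eq_right h]
            linarith [pow_nonneg (abs_nonneg x) n]
          · rw [max_eq_left h, one_pow]
            linarith [pow_nonneg (abs_nonneg x) n]
  calc |Lk α k x| * (1 + |x|) ^ n ≤ |Lk α k x| * (2 ^ n * (1 + |x| ^ n)) :=
        mul_le_mul_of_nonneg_left h1 (abs_nonneg _)
    _ = 2 ^ n * (|Lk α k x| + |x| ^ n * |Lk α k x|) := by ring
    _ ≤ 2 ^ n * (E0 + En) := by
        have ha := hE0 x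
        simp only [pow_zero, one_mul] at ha
        have hb := hEn x
        have : (0:ℝ) < 2 ^ n := by positivity
        nlinarith

lemma main_bound {α : ℝ} (hα : 0 < α) {k : ℕ} (hk : 1 ≤ k) (b : ℤ → ℝ)
    (C β : ℝ) (hC : 0 < C) (hβ : 0 < β)
    (hb : ∀ j : ℤ, |b j| ≤ C * (1 + |(j : ℝ)|) ^ β) {R : ℝ} (hR : 0 ≤ R) :
    ∃ u : ℤ → ℝ, Summable u ∧
      ∀ x : ℝ, |x| ≤ R → ∀ j : ℤ, |b j * Lk α k (x - j)| ≤ u j := by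
  set n : ℕ := ⌈β⌉₊ + 2 with hn
  have hβn : β + 2 ≤ (n : ℝ) := by
    have := Nat.le_ceil β
    push_cast [hn]
    linarith
  obtain ⟨D, hD0, hD⟩ := Lk_decay hα hk n
  refine ⟨fun j => (C * (1 + R) ^ β * D * (4 * (1 + R ^ 2))) * ((1:ℝ) + (j:ℝ) ^ 2)⁻¹,
    (summable_inv_one_add_sq_int).mul_left _, fun x hx j => ?_⟩
  set y : ℝ := x - j with hy
  have h1y : (1:ℝ) ≤ 1 + |y| := by linarith [abs_nonneg y]
  have h1ypos : (0:ℝ) < 1 + |y| := by linarith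
  have h1R : (0:ℝ) ≤ 1 + R := by linarith
  have hLk : |Lk α k y| ≤ D * (((1 + |y|) ^ n)⁻¹) := by
    rw [← div_eq_mul_inv, le_div_iff₀ (by positivity)]
    exact hD y
  have hjb : (1 + |(j:ℝ)|) ≤ (1 + R) * (1 + |y|) := by
    have hxy : |(j:ℝ)| ≤ |x| + |y| := by
      calc |(j:ℝ)| = |x - y| := by rw [hy]; congr 1; ring
        _ ≤ |x| + |y| := abs_sub _ _
    nlinarith [abs_nonneg y, abs_nonneg x]
  have hjrp : (1 + |(j:ℝ)|) ^ β ≤ (1 + R) ^ β * (1 + |y|) ^ β := by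
    rw [← Real.mul_rpow h1R (by linarith)]
    exact Real.rpow_le_rpow (by positivity) hjb hβ.le
  have hpow : (1 + |y|) ^ β * (((1 + |y|) ^ n)⁻¹) ≤ ((1 + |y|) ^ 2)⁻¹ := by
    rw [show ((1 + |y|) ^ n) = (1 + |y|) ^ ((n : ℝ)) by rw [Real.rpow_natCast],
      ← Real.rpow_neg h1ypos.le, ← Real.rpow_add h1ypos]
    calc (1 + |y|) ^ (β + -(n:ℝ)) ≤ (1 + |y|) ^ (-(2:ℝ)) :=
          Real.rpow_le_rpow_of_exponent_le h1y (by linarith)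
      _ = ((1 + |y|) ^ (2:ℕ))⁻¹ := by
          rw [← Real.rpow_natCast (1 + |y|) 2, Real.rpow_neg h1ypos.le]
          norm_num
  have hsq : ((1 + |y|) ^ 2)⁻¹ ≤ ((1:ℝ) + y ^ 2)⁻¹ := by
    apply inv_anti₀ (by positivity)
    nlinarith [sq_abs y, abs_nonneg y]
  have htb : ((1:ℝ) + y ^ 2)⁻¹ ≤ (4 * (1 + R ^ 2)) * ((1:ℝ) + (j:ℝ) ^ 2)⁻¹ := by
    have := transl_bound (a := 1) le_rfl hR hx j
    rw [one_mul] at this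
    exact this
  have hLk0 : (0:ℝ) ≤ (((1 + |y|) ^ n)⁻¹) := by positivity
  calc |b j * Lk α k y| = |b j| * |Lk α k y| := abs_mul _ _
    _ ≤ (C * (1 + |(j:ℝ)|) ^ β) * (D * (((1 + |y|) ^ n)⁻¹)) := by
        apply mul_le_mul (hb j) hLk (abs_nonneg _)
        positivity
    _ ≤ (C * ((1 + R) ^ β * (1 + |y|) ^ β)) * (D * (((1 + |y|) ^ n)⁻¹)) := by
        apply mul_le_mul_of_nonneg_right _ (by positivity)
        exact mul_le_mul_of_nonneg_left hjrp hC.le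
    _ = (C * (1 + R) ^ β * D) * ((1 + |y|) ^ β * (((1 + |y|) ^ n)⁻¹)) := by ring
    _ ≤ (C * (1 + R) ^ β * D) * (((1 + |y|) ^ 2)⁻¹) := by
        apply mul_le_mul_of_nonneg_left hpow
        positivity
    _ ≤ (C * (1 + R) ^ β * D) * (((1:ℝ) + y ^ 2)⁻¹) := by
        apply mul_le_mul_of_nonneg_left hsq
        positivity
    _ ≤ (C * (1 + R) ^ β * D) * ((4 * (1 + R ^ 2)) * ((1:ℝ) + (j:ℝ) ^ 2)⁻¹) := by
        apply mul_le_mul_of_nonneg_left htb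
        positivity
    _ = (C * (1 + R) ^ β * D * (4 * (1 + R ^ 2))) * ((1:ℝ) + (j:ℝ) ^ 2)⁻¹ := by ring

end Stmt7

/-- For a sequence b of polynomial growth, the series
`f_b(x) = Σⱼ bⱼ Lₖ(x - j)` converges absolutely for every x, uniformly on
every compact subset of ℝ. -/
theorem stmt_7 (α : ℝ) (hα : 0 < α) (k : ℕ) (hk : 1 ≤ k) (b : ℤ → ℝ)
    (C β : ℝ) (hC : 0 < C) (hβ : 0 < β)
    (hb : ∀ j : ℤ, |b j| ≤ C * (1 + |(j : ℝ)|) ^ β) :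
    (∀ x : ℝ, Summable fun j : ℤ => |b j * Lk α k (x - j)|) ∧
    ∀ K : Set ℝ, IsCompact K →
      TendstoUniformlyOn (fun (s : Finset ℤ) x => ∑ j ∈ s, b j * Lk α k (x - j))
        (fun x => ∑' j : ℤ, b j * Lk α k (x - j)) atTop K := by
  constructor
  · intro x
    obtain ⟨u, hu, hub⟩ := Stmt7.main_bound hα hk b C β hC hβ hb (abs_nonneg x)
    exact Summable.of_nonneg_of_le (fun j => abs_nonneg _) (fun j => hub x le_rfl j) hu
  · intro K hK
    obtain ⟨r, hr⟩ := hK.isBounded.subset_closedBall 0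
    obtain ⟨u, hu, hub⟩ := Stmt7.main_bound hα hk b C β hC hβ hb
      (R := max r 0) (le_max_right _ _)
    apply tendstoUniformlyOn_tsum hu
    intro j x hx
    rw [Real.norm_eq_abs]
    apply hub x _ j
    have := hr hx
    rw [Metric.mem_closedBall, Real.dist_eq, sub_zero] at this
    exact this.trans (le_max_left _ _)
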